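/- Let X be a real Hilbert space, let A be a nonempty closed affine subspace of X with parallel subspace U := A − A, and let B := {x ∈ X : ⟨x, v⟩ = β} be a hyperplane with ‖v‖ = 1. Then the set B − A = {b − a : b ∈ B, a ∈ A} is a closed affine subspace of X. -/
import Mathlib


open RealInnerProductSpace Pointwise

/-- The metric (nearest-point) projection onto a set `C` in a real inner product space:
`metricProj C x` is a point of `C` minimizing the distance to `x` (when such a point exists;
for a nonempty closed convex set in a Hilbert space it exists and is unique). -/
noncomputable def metricProj {X : Type*} [NormedAddCommGroup X] [InnerProductSpace ℝ X]
    (C : Set X) (x : X) : X :=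
  letI := Classical.dec (∃ p ∈ C, ∀ q ∈ C, ‖x - p‖ ≤ ‖x - q‖)
  if h : ∃ p ∈ C, ∀ q ∈ C, ‖x - p‖ ≤ ‖x - q‖ then h.choose else 0

theorem hyperplane_sub_affine_isClosed_affine
    {X : Type*} [NormedAddCommGroup X] [InnerProductSpace ℝ X] [CompleteSpace X]
    (A : AffineSubspace ℝ X) (hA : (A : Set X).Nonempty) (hAc : IsClosed (A : Set X))
    (v : X) (hv : ‖v‖ = 1) (β : ℝ) (B : Set X) (hB : B = {y : X | ⟪y, v⟫ = β}) :
    IsClosed (B - (A : Set X)) ∧ ∃ S : AffineSubspace ℝ X, (S : Set X) = B - (A : Set X) := by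
  obtain ⟨a₀, ha₀⟩ := hA
  set W : Submodule ℝ X := (ℝ ∙ v)ᗮ ⊔ A.direction with hW
  have hbv : ⟪β • v, v⟫ = β := by
    rw [real_inner_smul_left, real_inner_self_eq_norm_sq, hv]; ring
  have hset : ((AffineSubspace.mk' (β • v - a₀) W : AffineSubspace ℝ X) : Set X)
      = B - (A : Set X) := by
    ext x
    simp only [SetLike.mem_coe, AffineSubspace.mem_mk', vsub_eq_sub,
      Set.mem_sub, hB, Set.mem_setOf_eq]
    constructor
    · intro hw
      obtain ⟨p, hp, u, hu, hpu⟩ := Submodule.mem_sup.mp hw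
      have hpv : ⟪p, v⟫ = 0 :=
        Submodule.mem_orthogonal_singleton_iff_inner_left.mp hp
      have hx : x = p + u + (β • v - a₀) := by
        rw [hpu]; abel
      refine ⟨β • v + p, by rw [inner_add_left, hbv, hpv, add_zero],
        a₀ - u, ?_, by rw [hx]; abel⟩
      have := AffineSubspace.vadd_mem_of_mem_direction (Submodule.neg_mem _ hu) ha₀
      simpa [sub_eq_neg_add] using this
    · rintro ⟨b, hb, a, ha, rfl⟩
      have : b - a - (β • v - a₀) = (b - β • v) + (a₀ - a) := by abel
      rw [this]
      refine Submodule.add_mem _ (Submodule.mem_sup_left ?_) (Submodule.mem_sup_right ?_)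
      · rw [Submodule.mem_orthogonal_singleton_iff_inner_left, inner_sub_left, hbv, hb, sub_self]
      · simpa using AffineSubspace.vsub_mem_direction ha₀ ha
  have hWc : IsClosed (W : Set X) := by
    by_cases h : A.direction ≤ (ℝ ∙ v)ᗮ
    · have : W = (ℝ ∙ v)ᗮ := sup_eq_left.mpr h
      rw [this]
      exact Submodule.isClosed_orthogonal _
    · obtain ⟨u, hu, hnu⟩ := SetLike.not_le_iff_exists.mp h
      have hc : ⟪u, v⟫ ≠ 0 := fun hc =>
        hnu (Submodule.mem_orthogonal_singleton_iff_inner_left.mpr hc)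
      have htop : W = ⊤ := by
        rw [eq_top_iff]
        intro x _
        have hx : x = (x - (⟪x, v⟫ / ⟪u, v⟫) • u) + (⟪x, v⟫ / ⟪u, v⟫) • u := by abel
        rw [hx]
        refine Submodule.add_mem _ (Submodule.mem_sup_left ?_)
          (Submodule.mem_sup_right (Submodule.smul_mem _ _ hu))
        rw [Submodule.mem_orthogonal_singleton_iff_inner_left, inner_sub_left,
          real_inner_smul_left, div_mul_cancel₀ _ hc, sub_self]
      rw [htop]
      rw [Submodule.top_coe]
      exact isClosed_univ
  constructor
  · have heq : B - (A : Set X) = (fun x => x - (β • v - a₀)) ⁻¹' (W : Set X) := by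
      ext x
      rw [← hset]
      simp [AffineSubspace.mem_mk', vsub_eq_sub]
    rw [heq]
    exact hWc.preimage (continuous_id.sub continuous_const)
  · exact ⟨_, hset⟩
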